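/- Let V be a real inner product space of finite dimension n ≥ 4, let R be an algebraic curvature tensor on V, let {e₁,…,e_n} be an orthonormal basis of V, and let S₀ = (1/(n(n−1)))·Σ_{i,j=1}^{n} R(e_i,e_j,e_i,e_j) be the normalized scalar curvature of R. If for all orthonormal pairs {u,v} in V one has R(u,v,u,v) > (n(n−1)/(n²−n+12))·S₀, then R has positive isotropic curvature, i.e. for every orthonormal four-frame {f₁,f₂,f₃,f₄} in V one has R(f₁,f₃,f₁,f₃) + R(f₁,f₄,f₁,f₄) + R(f₂,f₃,f₂,f₃) + R(f₂,f₄,f₂,f₄) − 2·R(f₁,f₂,f₃,f₄) > 0. -/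

import Mathlib

open scoped RealInnerProductSpace

variable {V : Type*} [NormedAddCommGroup V] [InnerProductSpace ℝ V]

/-- An algebraic curvature tensor on a real inner product space `V`:
an `ℝ`-multilinear map `V × V × V × V → ℝ` with the standard symmetries and
the first Bianchi identity. -/
def IsCurvatureTensor (R : V →ₗ[ℝ] V →ₗ[ℝ] V →ₗ[ℝ] V →ₗ[ℝ] ℝ) : Prop :=
  (∀ X Y Z W : V, R X Y Z W = - R Y X Z W) ∧
  (∀ X Y Z W : V, R X Y Z W = - R X Y W Z) ∧
  (∀ X Y Z W : V, R X Y Z W = R Z W X Y) ∧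
  (∀ X Y Z W : V, R X Y Z W + R X Z W Y + R X W Y Z = 0)

/-- An orthonormal four-frame: four pairwise orthogonal unit vectors. -/
def OrthonormalFrame4 (e₁ e₂ e₃ e₄ : V) : Prop :=
  ‖e₁‖ = 1 ∧ ‖e₂‖ = 1 ∧ ‖e₃‖ = 1 ∧ ‖e₄‖ = 1 ∧
  ⟪e₁, e₂⟫ = 0 ∧ ⟪e₁, e₃⟫ = 0 ∧ ⟪e₁, e₄⟫ = 0 ∧
  ⟪e₂, e₃⟫ = 0 ∧ ⟪e₂, e₄⟫ = 0 ∧ ⟪e₃, e₄⟫ = 0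

section Aux

/-- Trace of a bilinear form is independent of the orthonormal basis. -/
lemma aux_btrace {n : ℕ} (B : V →ₗ[ℝ] V →ₗ[ℝ] ℝ) (b b' : OrthonormalBasis (Fin n) ℝ V) :
    ∑ i, B (b' i) (b' i) = ∑ i, B (b i) (b i) := by
  have expand : ∀ x : V, B x x = ∑ k, ∑ l, ⟪b k, x⟫ * ⟪b l, x⟫ * B (b k) (b l) := by
    intro x
    conv_lhs => rw [← b.sum_repr' x]
    simp only [map_sum, LinearMap.sum_apply, map_smul, LinearMap.smul_apply, smul_eq_mul]
    simp only [Finset.mul_sum]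
    rw [Finset.sum_comm]
    exact Finset.sum_congr rfl fun k _ => Finset.sum_congr rfl fun l _ => by ring
  calc ∑ i, B (b' i) (b' i)
      = ∑ i, ∑ k, ∑ l, ⟪b k, b' i⟫ * ⟪b l, b' i⟫ * B (b k) (b l) := by
        exact Finset.sum_congr rfl fun i _ => expand _
    _ = ∑ k, ∑ l, (∑ i, ⟪b k, b' i⟫ * ⟪b' i, b l⟫) * B (b k) (b l) := by
        rw [Finset.sum_comm]
        refine Finset.sum_congr rfl fun k _ => ?_
        rw [Finset.sum_comm]
        refine Finset.sum_congr rfl fun l _ => ?_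
        rw [Finset.sum_mul]
        refine Finset.sum_congr rfl fun i _ => ?_
        rw [real_inner_comm (b l) (b' i)]
    _ = ∑ k, ∑ l, ⟪b k, b l⟫ * B (b k) (b l) := by
        simp [b'.sum_inner_mul_inner]
    _ = ∑ i, B (b i) (b i) := by
        refine Finset.sum_congr rfl fun k _ => ?_
        rw [Finset.sum_eq_single k]
        · rw [real_inner_self_eq_norm_sq, b.orthonormal.1 k]; norm_num
        · intro l _ hlk
          rw [b.orthonormal.2 (Ne.symm hlk)]; ring
        · intro h; exact absurd (Finset.mem_univ k) h

noncomputable def auxB24 (R : V →ₗ[ℝ] V →ₗ[ℝ] V →ₗ[ℝ] V →ₗ[ℝ] ℝ) (x z : V) :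
    V →ₗ[ℝ] V →ₗ[ℝ] ℝ :=
  LinearMap.mk₂ ℝ (fun y w => R x y z w)
    (by intro y y' w; simp [LinearMap.add_apply])
    (by intro c y w; simp [LinearMap.smul_apply])
    (by intro y w w'; simp)
    (by intro c y w; simp)

noncomputable def auxG {n : ℕ} (R : V →ₗ[ℝ] V →ₗ[ℝ] V →ₗ[ℝ] V →ₗ[ℝ] ℝ)
    (b : OrthonormalBasis (Fin n) ℝ V) : V →ₗ[ℝ] V →ₗ[ℝ] ℝ :=
  LinearMap.mk₂ ℝ (fun x z => ∑ j, R x (b j) z (b j))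
    (by intro x x' z; simp [LinearMap.add_apply, Finset.sum_add_distrib])
    (by intro c x z; simp [LinearMap.smul_apply, Finset.mul_sum])
    (by intro x z z'; simp [Finset.sum_add_distrib])
    (by intro c x z; simp [Finset.mul_sum])

/-- The double trace of a curvature-type tensor is basis independent. -/
lemma aux_trace_inv {n : ℕ} (R : V →ₗ[ℝ] V →ₗ[ℝ] V →ₗ[ℝ] V →ₗ[ℝ] ℝ)
    (b b' : OrthonormalBasis (Fin n) ℝ V) :
    ∑ i, ∑ j, R (b' i) (b' j) (b' i) (b' j) = ∑ i, ∑ j, R (b i) (b j) (b i) (b j) := by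
  have step1 : ∀ x z : V, ∑ j, R x (b' j) z (b' j) = ∑ j, R x (b j) z (b j) := by
    intro x z
    exact aux_btrace (auxB24 R x z) b b'
  calc ∑ i, ∑ j, R (b' i) (b' j) (b' i) (b' j)
      = ∑ i, auxG R b (b' i) (b' i) := by
        refine Finset.sum_congr rfl fun i _ => ?_
        rw [show (auxG R b) (b' i) (b' i) = ∑ j, R (b' i) (b j) (b' i) (b j) from rfl]
        exact step1 _ _
    _ = ∑ i, auxG R b (b i) (b i) := aux_btrace _ b b'
    _ = ∑ i, ∑ j, R (b i) (b j) (b i) (b j) := rfl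

/-- Polarization identity, by pure multilinearity. -/
lemma aux_polar4 (R : V →ₗ[ℝ] V →ₗ[ℝ] V →ₗ[ℝ] V →ₗ[ℝ] ℝ) (x y z w : V) :
    R (x+z) (y+w) (x+z) (y+w) + R (x-z) (y-w) (x-z) (y-w)
      - R (x+z) (y-w) (x+z) (y-w) - R (x-z) (y+w) (x-z) (y+w)
    = 4 * (R x y z w + R x w z y + R z y x w + R z w x y) := by
  rw [sub_eq_add_neg x z, sub_eq_add_neg y w, ← neg_one_smul ℝ z, ← neg_one_smul ℝ w]
  simp only [map_add, map_smul, LinearMap.add_apply, LinearMap.smul_apply, smul_eq_mul]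
  ring

/-- Any orthonormal four-frame extends to an orthonormal basis. -/
lemma aux_frame_extend {n : ℕ} (hn : 4 ≤ n) (b : OrthonormalBasis (Fin n) ℝ V)
    {u₁ u₂ u₃ u₄ : V} (h : OrthonormalFrame4 u₁ u₂ u₃ u₄) :
    ∃ b' : OrthonormalBasis (Fin n) ℝ V,
      b' ⟨0, by omega⟩ = u₁ ∧ b' ⟨1, by omega⟩ = u₂ ∧
      b' ⟨2, by omega⟩ = u₃ ∧ b' ⟨3, by omega⟩ = u₄ := by
  obtain ⟨h1, h2, h3, h4, h12, h13, h14, h23, h24, h34⟩ := h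
  have hfd : FiniteDimensional ℝ V := Module.Finite.of_basis b.toBasis
  have hcard : Module.finrank ℝ V = Fintype.card (Fin n) := by
    simpa using Module.finrank_eq_card_basis b.toBasis
  have h0n : (0:ℕ) < n := by omega
  have h1n : (1:ℕ) < n := by omega
  have h2n : (2:ℕ) < n := by omega
  have h3n : (3:ℕ) < n := by omega
  let i₀ : Fin n := ⟨0, h0n⟩
  let i₁ : Fin n := ⟨1, h1n⟩
  let i₂ : Fin n := ⟨2, h2n⟩
  let i₃ : Fin n := ⟨3, h3n⟩
  let v : Fin n → V := fun i =>
    if i = i₀ then u₁ else if i = i₁ then u₂ else if i = i₂ then u₃ else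
    if i = i₃ then u₄ else 0
  let s : Set (Fin n) := {i₀, i₁, i₂, i₃}
  have hval : v i₀ = u₁ ∧ v i₁ = u₂ ∧ v i₂ = u₃ ∧ v i₃ = u₄ := by
    refine ⟨by simp [v], ?_, ?_, ?_⟩ <;>
      norm_num [v, i₀, i₁, i₂, i₃, Fin.ext_iff]
  have norms : ∀ x : V, ‖x‖ = 1 → ⟪x, x⟫ = 1 := by
    intro x hx
    rw [real_inner_self_eq_norm_sq, hx]; norm_num
  have d1 := norms _ h1; have d2 := norms _ h2
  have d3 := norms _ h3; have d4 := norms _ h4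
  have h21 : ⟪u₂, u₁⟫ = 0 := by rw [real_inner_comm]; exact h12
  have h31 : ⟪u₃, u₁⟫ = 0 := by rw [real_inner_comm]; exact h13
  have h41 : ⟪u₄, u₁⟫ = 0 := by rw [real_inner_comm]; exact h14
  have h32 : ⟪u₃, u₂⟫ = 0 := by rw [real_inner_comm]; exact h23
  have h42 : ⟪u₄, u₂⟫ = 0 := by rw [real_inner_comm]; exact h24
  have h43 : ⟪u₄, u₃⟫ = 0 := by rw [real_inner_comm]; exact h34
  have horth : Orthonormal ℝ (s.restrict v) := by
    rw [orthonormal_iff_ite]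
    rintro ⟨i, hi⟩ ⟨j, hj⟩
    have hmem : ∀ k, k ∈ s → k = i₀ ∨ k = i₁ ∨ k = i₂ ∨ k = i₃ := by
      intro k hk; simpa [s] using hk
    simp only [Set.restrict_apply, Subtype.mk.injEq]
    rcases hmem i hi with rfl | rfl | rfl | rfl <;>
      rcases hmem j hj with rfl | rfl | rfl | rfl <;>
      norm_num [v, i₀, i₁, i₂, i₃, Fin.ext_iff, d1, d2, d3, d4, Set.restrict, h1, h2, h3, h4,
        h12, h13, h14, h23, h24, h34, h21, h31, h41, h32, h42, h43]
  obtain ⟨b', hb'⟩ := horth.exists_orthonormalBasis_extension_of_card_eq hcard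
  refine ⟨b', ?_, ?_, ?_, ?_⟩
  · rw [hb' i₀ (by simp [s])]; exact hval.1
  · rw [hb' i₁ (by simp [s])]; exact hval.2.1
  · rw [hb' i₂ (by simp [s])]; exact hval.2.2.1
  · rw [hb' i₃ (by simp [s])]; exact hval.2.2.2

/-- Key counting estimate: for any orthonormal four-frame, twice the sum of the two
sectional curvatures `K(u₁,u₂) + K(u₃,u₄)` is bounded above using the scalar curvature
and the lower bound `m` on all other sectional curvatures. -/
lemma aux_pair_bound {n : ℕ} (hn : 4 ≤ n) (b : OrthonormalBasis (Fin n) ℝ V)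
    (R : V →ₗ[ℝ] V →ₗ[ℝ] V →ₗ[ℝ] V →ₗ[ℝ] ℝ)
    (hR1 : ∀ X Y Z W : V, R X Y Z W = - R Y X Z W)
    (hR2 : ∀ X Y Z W : V, R X Y Z W = - R X Y W Z)
    (m : ℝ)
    (hyp : ∀ u v : V, ‖u‖ = 1 → ‖v‖ = 1 → ⟪u, v⟫ = 0 → R u v u v > m)
    {u₁ u₂ u₃ u₄ : V} (h : OrthonormalFrame4 u₁ u₂ u₃ u₄) :
    2 * (R u₁ u₂ u₁ u₂ + R u₃ u₄ u₃ u₄) <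
      (∑ i, ∑ j, R (b i) (b j) (b i) (b j)) - ((n:ℝ)^2 - (n:ℝ) - 4) * m := by
  obtain ⟨b', hb1, hb2, hb3, hb4⟩ := aux_frame_extend hn b h
  have swp : ∀ x y : V, R y x y x = R x y x y := by
    intro x y
    have e1 := hR1 y x y x
    have e2 := hR2 x y y x
    have e3 := hR1 x y y x
    have e4 := hR2 y x y x
    linarith
  set f : Fin n × Fin n → ℝ := fun p => R (b' p.1) (b' p.2) (b' p.1) (b' p.2) with hf
  have hdiag0 : ∀ p ∈ (Finset.univ : Finset (Fin n)).diag, f p = 0 := by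
    rintro ⟨i, j⟩ hp
    rw [Finset.mem_diag] at hp
    obtain ⟨-, h2⟩ := hp
    simp only at h2
    subst h2
    have := hR1 (b' i) (b' i) (b' i) (b' i)
    simp only [hf]
    linarith
  have hts : ∑ p ∈ (Finset.univ : Finset (Fin n)).offDiag, f p
      = ∑ i, ∑ j, R (b i) (b j) (b i) (b j) := by
    rw [← aux_trace_inv R b b', ← Finset.sum_product']
    rw [← Finset.diag_union_offDiag, Finset.sum_union (Finset.disjoint_diag_offDiag _),
      Finset.sum_eq_zero hdiag0, zero_add]
  set i₀ : Fin n := ⟨0, by omega⟩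
  set i₁ : Fin n := ⟨1, by omega⟩
  set i₂ : Fin n := ⟨2, by omega⟩
  set i₃ : Fin n := ⟨3, by omega⟩
  have ne01 : i₀ ≠ i₁ := by simp [i₀, i₁, Fin.ext_iff]
  have ne23 : i₂ ≠ i₃ := by simp [i₂, i₃, Fin.ext_iff]
  set P4 : Finset (Fin n × Fin n) := {(i₀,i₁),(i₁,i₀),(i₂,i₃),(i₃,i₂)} with hP4
  have hsub : P4 ⊆ (Finset.univ : Finset (Fin n)).offDiag := by
    intro p hp
    simp only [hP4, Finset.mem_insert, Finset.mem_singleton] at hp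
    rcases hp with rfl | rfl | rfl | rfl
    · exact Finset.mem_offDiag.mpr ⟨Finset.mem_univ _, Finset.mem_univ _, ne01⟩
    · exact Finset.mem_offDiag.mpr ⟨Finset.mem_univ _, Finset.mem_univ _, ne01.symm⟩
    · exact Finset.mem_offDiag.mpr ⟨Finset.mem_univ _, Finset.mem_univ _, ne23⟩
    · exact Finset.mem_offDiag.mpr ⟨Finset.mem_univ _, Finset.mem_univ _, ne23.symm⟩
  have hcardP4 : P4.card = 4 := by
    simp [hP4, Finset.card_insert_of_notMem, Prod.ext_iff, i₀, i₁, i₂, i₃, Fin.ext_iff]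
  have hsumP4 : ∑ p ∈ P4, f p = 2 * (R u₁ u₂ u₁ u₂ + R u₃ u₄ u₃ u₄) := by
    rw [hP4]
    rw [Finset.sum_insert (by simp [Prod.ext_iff, i₀, i₁, Fin.ext_iff]),
        Finset.sum_insert (by simp [Prod.ext_iff, i₀, i₁, i₂, i₃, Fin.ext_iff]),
        Finset.sum_insert (by simp [Prod.ext_iff, i₂, i₃, Fin.ext_iff]),
        Finset.sum_singleton]
    simp only [hf, hb1, hb2, hb3, hb4]
    rw [swp u₁ u₂, swp u₃ u₄]
    ring
  have hrest : (((Finset.univ : Finset (Fin n)).offDiag.card - P4.card : ℕ) : ℝ) * m <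
      ∑ p ∈ (Finset.univ : Finset (Fin n)).offDiag \ P4, f p := by
    have hne : ((Finset.univ : Finset (Fin n)).offDiag \ P4).Nonempty := by
      rw [← Finset.card_pos, Finset.card_sdiff_of_subset hsub, Finset.offDiag_card, hcardP4]
      simp only [Finset.card_univ, Fintype.card_fin]
      have hnn : n ≤ n * n := Nat.le_mul_of_pos_left n (by omega)
      have h12 : n + 12 ≤ n * n := by nlinarith
      omega
    have := Finset.sum_lt_sum_of_nonempty hne
      (f := fun _ => m) (g := f) ?_
    · calc (((Finset.univ : Finset (Fin n)).offDiag.card - P4.card : ℕ) : ℝ) * m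
          = ∑ _p ∈ (Finset.univ : Finset (Fin n)).offDiag \ P4, m := by
            rw [Finset.sum_const, Finset.card_sdiff_of_subset hsub, nsmul_eq_mul]
        _ < _ := this
    · rintro ⟨i, j⟩ hp
      have hij : i ≠ j := by
        have := (Finset.mem_sdiff.mp hp).1
        exact (Finset.mem_offDiag.mp this).2.2
      exact hyp (b' i) (b' j) (b'.orthonormal.1 i) (b'.orthonormal.1 j)
        (b'.orthonormal.2 hij)
  have hcards : (((Finset.univ : Finset (Fin n)).offDiag.card - P4.card : ℕ) : ℝ)
      = (n:ℝ)^2 - (n:ℝ) - 4 := by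
    rw [Finset.offDiag_card, hcardP4]
    simp only [Finset.card_univ, Fintype.card_fin]
    have hnn : n ≤ n * n := Nat.le_mul_of_pos_left n (by omega)
    have h12 : n + 12 ≤ n * n := by nlinarith
    push_cast [Nat.cast_sub hnn, Nat.cast_sub (show 4 ≤ n*n - n by omega)]
    ring
  have hsplit : ∑ p ∈ P4, f p + ∑ p ∈ (Finset.univ : Finset (Fin n)).offDiag \ P4, f p
      = ∑ p ∈ (Finset.univ : Finset (Fin n)).offDiag, f p := by
    rw [add_comm]; exact Finset.sum_sdiff hsub
  rw [hcards] at hrest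
  linarith [hrest, hsplit, hsumP4, hts]

lemma aux_norm_comb (x y : V) (hx : ‖x‖ = 1) (hy : ‖y‖ = 1) (hxy : ⟪x, y⟫ = 0) :
    ‖(Real.sqrt 2)⁻¹ • (x + y)‖ = 1 := by
  rw [norm_smul]
  have h2 : ‖x + y‖ = Real.sqrt 2 := by
    have hsq : ‖x + y‖^2 = 2 := by
      rw [norm_add_sq_real, hx, hy, hxy]; ring
    rw [← hsq, Real.sqrt_sq (norm_nonneg _)]
  rw [h2, Real.norm_eq_abs, abs_inv, abs_of_nonneg (Real.sqrt_nonneg 2),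
    inv_mul_cancel₀ (ne_of_gt (Real.sqrt_pos.mpr two_pos))]

lemma aux_norm_comb' (x y : V) (hx : ‖x‖ = 1) (hy : ‖y‖ = 1) (hxy : ⟪x, y⟫ = 0) :
    ‖(Real.sqrt 2)⁻¹ • (x - y)‖ = 1 := by
  have := aux_norm_comb x (-y) hx (by rwa [norm_neg]) (by rw [inner_neg_right, hxy, neg_zero])
  rwa [← sub_eq_add_neg] at this

lemma aux_scale (R : V →ₗ[ℝ] V →ₗ[ℝ] V →ₗ[ℝ] V →ₗ[ℝ] ℝ) (c : ℝ) (a d : V) :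
    R (c • a) (c • d) (c • a) (c • d) = c^4 * R a d a d := by
  simp only [map_smul, LinearMap.smul_apply, smul_eq_mul]
  ring

end Aux

set_option maxHeartbeats 2000000 in
theorem stmt_12 {V : Type*} [NormedAddCommGroup V] [InnerProductSpace ℝ V]
    (n : ℕ) (hn : 4 ≤ n) (b : OrthonormalBasis (Fin n) ℝ V)
    (R : V →ₗ[ℝ] V →ₗ[ℝ] V →ₗ[ℝ] V →ₗ[ℝ] ℝ) (hR : IsCurvatureTensor R)
    (S₀ : ℝ) (hS₀ : S₀ = (1 / ((n : ℝ) * ((n : ℝ) - 1))) *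
      ∑ i : Fin n, ∑ j : Fin n, R (b i) (b j) (b i) (b j))
    (hyp : ∀ u v : V, ‖u‖ = 1 → ‖v‖ = 1 → ⟪u, v⟫ = 0 →
      R u v u v > ((n : ℝ) * ((n : ℝ) - 1) / ((n : ℝ) ^ 2 - (n : ℝ) + 12)) * S₀) :
    ∀ f₁ f₂ f₃ f₄ : V, OrthonormalFrame4 f₁ f₂ f₃ f₄ →
      R f₁ f₃ f₁ f₃ + R f₁ f₄ f₁ f₄ + R f₂ f₃ f₂ f₃ + R f₂ f₄ f₂ f₄
        - 2 * R f₁ f₂ f₃ f₄ > 0 := by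
  obtain ⟨hR1, hR2, hR3, hR4⟩ := hR
  intro f₁ f₂ f₃ f₄ hfr
  obtain ⟨n1, n2, n3, n4, h12, h13, h14, h23, h24, h34⟩ := hfr
  have h21 : ⟪f₂, f₁⟫ = 0 := by rw [real_inner_comm]; exact h12
  have h31 : ⟪f₃, f₁⟫ = 0 := by rw [real_inner_comm]; exact h13
  have h41 : ⟪f₄, f₁⟫ = 0 := by rw [real_inner_comm]; exact h14
  have h32 : ⟪f₃, f₂⟫ = 0 := by rw [real_inner_comm]; exact h23
  have h42 : ⟪f₄, f₂⟫ = 0 := by rw [real_inner_comm]; exact h24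
  have h43 : ⟪f₄, f₃⟫ = 0 := by rw [real_inner_comm]; exact h34
  have s11 : ⟪f₁, f₁⟫ = (1:ℝ) := by rw [real_inner_self_eq_norm_sq, n1]; norm_num
  have s22 : ⟪f₂, f₂⟫ = (1:ℝ) := by rw [real_inner_self_eq_norm_sq, n2]; norm_num
  have s33 : ⟪f₃, f₃⟫ = (1:ℝ) := by rw [real_inner_self_eq_norm_sq, n3]; norm_num
  have s44 : ⟪f₄, f₄⟫ = (1:ℝ) := by rw [real_inner_self_eq_norm_sq, n4]; norm_num
  set c₀ : ℝ := (Real.sqrt 2)⁻¹ with hc₀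
  set m : ℝ := ((n : ℝ) * ((n : ℝ) - 1) / ((n : ℝ) ^ 2 - (n : ℝ) + 12)) * S₀ with hm
  set T : ℝ := ∑ i : Fin n, ∑ j : Fin n, R (b i) (b j) (b i) (b j) with hT
  have hn4 : (4:ℝ) ≤ (n:ℝ) := by exact_mod_cast hn
  have hden : (n:ℝ)^2 - (n:ℝ) + 12 ≠ 0 := by nlinarith
  have hTval : T = (n:ℝ) * ((n:ℝ) - 1) * S₀ := by
    rw [hS₀]
    have : (n:ℝ) * ((n:ℝ) - 1) ≠ 0 := by nlinarith
    have hn1 : (n:ℝ) - 1 ≠ 0 := by linarith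
    field_simp
  have hmT : ((n:ℝ)^2 - (n:ℝ) + 12) * m = T := by
    rw [hm, hTval]
    have hden' : (n:ℝ) * ((n:ℝ) - 1) + 12 ≠ 0 := by nlinarith
    field_simp
  -- the eight unit vectors
  have hg1 : ‖c₀ • (f₁ + f₃)‖ = 1 := aux_norm_comb _ _ n1 n3 h13
  have hg2 : ‖c₀ • (f₂ + f₄)‖ = 1 := aux_norm_comb _ _ n2 n4 h24
  have hg3 : ‖c₀ • (f₁ - f₃)‖ = 1 := aux_norm_comb' _ _ n1 n3 h13
  have hg4 : ‖c₀ • (f₂ - f₄)‖ = 1 := aux_norm_comb' _ _ n2 n4 h24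
  have hh1 : ‖c₀ • (f₁ + f₄)‖ = 1 := aux_norm_comb _ _ n1 n4 h14
  have hh2 : ‖c₀ • (f₂ - f₃)‖ = 1 := aux_norm_comb' _ _ n2 n3 h23
  have hh3 : ‖c₀ • (f₁ - f₄)‖ = 1 := aux_norm_comb' _ _ n1 n4 h14
  have hh4 : ‖c₀ • (f₂ + f₃)‖ = 1 := aux_norm_comb _ _ n2 n3 h23
  -- orthogonality facts
  have smul2 : ∀ x y : V, ⟪x, y⟫ = 0 → ⟪c₀ • x, c₀ • y⟫ = 0 := by
    intro x y hxy
    rw [real_inner_smul_left, real_inner_smul_right, hxy, mul_zero, mul_zero]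
  have og12 : ⟪c₀ • (f₁ + f₃), c₀ • (f₂ + f₄)⟫ = 0 := by
    refine smul2 _ _ ?_
    simp only [inner_add_left, inner_add_right, h12, h14, h32, h34]; norm_num
  have og13 : ⟪c₀ • (f₁ + f₃), c₀ • (f₁ - f₃)⟫ = 0 := by
    refine smul2 _ _ ?_
    simp only [inner_add_left, inner_sub_right, s11, s33, h13, h31]; norm_num
  have og14 : ⟪c₀ • (f₁ + f₃), c₀ • (f₂ - f₄)⟫ = 0 := by
    refine smul2 _ _ ?_
    simp only [inner_add_left, inner_sub_right, h12, h14, h32, h34]; norm_num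
  have og23 : ⟪c₀ • (f₂ + f₄), c₀ • (f₁ - f₃)⟫ = 0 := by
    refine smul2 _ _ ?_
    simp only [inner_add_left, inner_sub_right, h21, h23, h41, h43]; norm_num
  have og24 : ⟪c₀ • (f₂ + f₄), c₀ • (f₂ - f₄)⟫ = 0 := by
    refine smul2 _ _ ?_
    simp only [inner_add_left, inner_sub_right, s22, s44, h24, h42]; norm_num
  have og34 : ⟪c₀ • (f₁ - f₃), c₀ • (f₂ - f₄)⟫ = 0 := by
    refine smul2 _ _ ?_
    simp only [inner_sub_left, inner_sub_right, h12, h14, h32, h34]; norm_num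
  have oh12 : ⟪c₀ • (f₁ + f₄), c₀ • (f₂ - f₃)⟫ = 0 := by
    refine smul2 _ _ ?_
    simp only [inner_add_left, inner_sub_right, h12, h13, h42, h43]; norm_num
  have oh13 : ⟪c₀ • (f₁ + f₄), c₀ • (f₁ - f₄)⟫ = 0 := by
    refine smul2 _ _ ?_
    simp only [inner_add_left, inner_sub_right, s11, s44, h14, h41]; norm_num
  have oh14 : ⟪c₀ • (f₁ + f₄), c₀ • (f₂ + f₃)⟫ = 0 := by
    refine smul2 _ _ ?_
    simp only [inner_add_left, inner_add_right, h12, h13, h42, h43]; norm_num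
  have oh23 : ⟪c₀ • (f₂ - f₃), c₀ • (f₁ - f₄)⟫ = 0 := by
    refine smul2 _ _ ?_
    simp only [inner_sub_left, inner_sub_right, h21, h24, h31, h34]; norm_num
  have oh24 : ⟪c₀ • (f₂ - f₃), c₀ • (f₂ + f₃)⟫ = 0 := by
    refine smul2 _ _ ?_
    simp only [inner_sub_left, inner_add_right, s22, s33, h23, h32]; norm_num
  have oh34 : ⟪c₀ • (f₁ - f₄), c₀ • (f₂ + f₃)⟫ = 0 := by
    refine smul2 _ _ ?_
    simp only [inner_sub_left, inner_add_right, h12, h13, h42, h43]; norm_num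
  -- c₀^4 = 1/4
  have hc4 : c₀^4 = 1/4 := by
    have h2 : Real.sqrt 2 ^ 2 = 2 := Real.sq_sqrt (by norm_num)
    have h4 : Real.sqrt 2 ^ 4 = 4 := by
      rw [show (4:ℕ) = 2*2 from rfl, pow_mul, h2]; norm_num
    rw [hc₀, inv_pow, h4]; norm_num
  -- lower bounds from the hypothesis
  have L13 : R f₁ f₃ f₁ f₃ > m := hyp f₁ f₃ n1 n3 h13
  have L14 : R f₁ f₄ f₁ f₄ > m := hyp f₁ f₄ n1 n4 h14
  have L23 : R f₂ f₃ f₂ f₃ > m := hyp f₂ f₃ n2 n3 h23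
  have L24 : R f₂ f₄ f₂ f₄ > m := hyp f₂ f₄ n2 n4 h24
  have Lspm : (1/4) * R (f₁ + f₃) (f₂ - f₄) (f₁ + f₃) (f₂ - f₄) > m := by
    have := hyp _ _ hg1 hg4 og14
    rwa [aux_scale, hc4] at this
  have Lsmp : (1/4) * R (f₁ - f₃) (f₂ + f₄) (f₁ - f₃) (f₂ + f₄) > m := by
    have := hyp _ _ hg3 hg2 (by rw [real_inner_comm]; exact og23)
    rwa [aux_scale, hc4] at this
  have Ltpp : (1/4) * R (f₁ + f₄) (f₂ + f₃) (f₁ + f₄) (f₂ + f₃) > m := by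
    have := hyp _ _ hh1 hh4 oh14
    rwa [aux_scale, hc4] at this
  have Ltmm : (1/4) * R (f₁ - f₄) (f₂ - f₃) (f₁ - f₄) (f₂ - f₃) > m := by
    have := hyp _ _ hh3 hh2 (by rw [real_inner_comm]; exact oh23)
    rwa [aux_scale, hc4] at this
  -- upper bounds from the counting lemma
  have UA : (1/4) * R (f₁ + f₃) (f₂ + f₄) (f₁ + f₃) (f₂ + f₄)
      + (1/4) * R (f₁ - f₃) (f₂ - f₄) (f₁ - f₃) (f₂ - f₄)
      < (T - ((n:ℝ)^2 - (n:ℝ) - 4) * m) / 2 := by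
    have frA : OrthonormalFrame4 (c₀ • (f₁ + f₃)) (c₀ • (f₂ + f₄))
        (c₀ • (f₁ - f₃)) (c₀ • (f₂ - f₄)) :=
      ⟨hg1, hg2, hg3, hg4, og12, og13, og14, og23, og24, og34⟩
    have := aux_pair_bound hn b R hR1 hR2 m hyp frA
    rw [aux_scale, aux_scale, hc4] at this
    rw [← hT] at this
    linarith
  have UB : (1/4) * R (f₁ + f₄) (f₂ - f₃) (f₁ + f₄) (f₂ - f₃)
      + (1/4) * R (f₁ - f₄) (f₂ + f₃) (f₁ - f₄) (f₂ + f₃)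
      < (T - ((n:ℝ)^2 - (n:ℝ) - 4) * m) / 2 := by
    have frB : OrthonormalFrame4 (c₀ • (f₁ + f₄)) (c₀ • (f₂ - f₃))
        (c₀ • (f₁ - f₄)) (c₀ • (f₂ + f₃)) :=
      ⟨hh1, hh2, hh3, hh4, oh12, oh13, oh14, oh23, oh24, oh34⟩
    have := aux_pair_bound hn b R hR1 hR2 m hyp frB
    rw [aux_scale, aux_scale, hc4] at this
    rw [← hT] at this
    linarith
  -- the polarization identities and symmetries
  have pA := aux_polar4 R f₁ f₂ f₄ f₃
  have pB := aux_polar4 R f₁ f₂ f₃ f₄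
  have e1 : R f₄ f₂ f₁ f₃ = R f₁ f₃ f₄ f₂ := hR3 f₄ f₂ f₁ f₃
  have e2 : R f₄ f₃ f₁ f₂ = R f₁ f₂ f₄ f₃ := hR3 f₄ f₃ f₁ f₂
  have e3 : R f₁ f₂ f₄ f₃ = - R f₁ f₂ f₃ f₄ := hR2 f₁ f₂ f₄ f₃
  have e4 : R f₃ f₂ f₁ f₄ = R f₁ f₄ f₃ f₂ := hR3 f₃ f₂ f₁ f₄
  have e5 : R f₃ f₄ f₁ f₂ = R f₁ f₂ f₃ f₄ := hR3 f₃ f₄ f₁ f₂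
  have e6 : R f₁ f₄ f₃ f₂ = - R f₁ f₄ f₂ f₃ := hR2 f₁ f₄ f₃ f₂
  have bianchi := hR4 f₁ f₂ f₃ f₄
  linarith [L13, L14, L23, L24, Lspm, Lsmp, Ltpp, Ltmm, UA, UB, pA, pB,
    e1, e2, e3, e4, e5, e6, bianchi, hmT]
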